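/- Let G be a finite simple graph on n vertices, and let t, t' be adjacent vertices with t of degree 2. Then G has a Hamiltonian cycle if and only if G has a Hamiltonian path whose first vertex is t and last vertex is t'. -/

import Mathlib

open SimpleGraph Walk

private lemma ham_rev {V : Type} [DecidableEq V] {G : SimpleGraph V} {a b : V}
    {p : G.Walk a b} (hp : p.IsHamiltonian) : p.reverse.IsHamiltonian := by
  intro x
  rw [Walk.support_reverse, List.count_reverse]
  exact hp x

private lemma hamcycle_rotate {V : Type} [DecidableEq V] {G : SimpleGraph V} {v t : V}
    {c : G.Walk v v} (hc : c.IsHamiltonianCycle) (h : t ∈ c.support) :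
    (c.rotate t h).IsHamiltonianCycle := by
  rw [Walk.isHamiltonianCycle_iff_isCycle_and_support_count_tail_eq_one] at hc ⊢
  exact ⟨hc.1.rotate h, fun a => ((c.support_rotate t h).perm.count_eq a).trans (hc.2 a)⟩

/-- counts in the tail of the support of the reverse of a hamiltonian cycle -/
private lemma count_tail_rev {V : Type} [DecidableEq V] {G : SimpleGraph V} {t : V}
    {c : G.Walk t t} (hc : c.IsHamiltonianCycle) (a : V) :
    c.reverse.support.tail.count a = 1 := by
  have htail : c.support.tail.count a = 1 := by
    rw [← Walk.support_tail_of_not_nil c hc.isCycle.not_nil]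
    exact hc.isHamiltonian_tail a
  have h1 : c.reverse.support = t :: c.reverse.support.tail := Walk.support_eq_cons _
  have h2 : c.reverse.support.count a = c.support.count a := by
    rw [Walk.support_reverse, List.count_reverse]
  have h3 : c.support.count a = c.support.tail.count a + if t = a then 1 else 0 := by
    conv_lhs => rw [Walk.support_eq_cons c, List.count_cons]
    simp
  have h4 : c.reverse.support.count a
      = c.reverse.support.tail.count a + if t = a then 1 else 0 := by
    conv_lhs => rw [h1]
    simp [List.count_cons]
  rw [h2, h3] at h4
  split_ifs at h4 <;> omega

/-- the reverse of the tail of the reverse of a hamiltonian cycle is hamiltonian -/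
private lemma ham_rev_tail_rev {V : Type} [DecidableEq V] {G : SimpleGraph V} {t : V}
    {c : G.Walk t t} (hc : c.IsHamiltonianCycle) :
    c.reverse.tail.reverse.IsHamiltonian := by
  have hnn : ¬ c.reverse.Nil := by
    rw [Walk.not_nil_iff_lt_length, Walk.length_reverse]
    rw [← Walk.not_nil_iff_lt_length]
    exact hc.isCycle.not_nil
  intro a
  rw [Walk.support_reverse, List.count_reverse, Walk.support_tail_of_not_nil _ hnn]
  exact count_tail_rev hc a

/-- Let `G` be a finite simple graph, `t, t'` adjacent vertices with `t` of degree 2.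
Then `G` has a Hamiltonian cycle iff `G` has a Hamiltonian path from `t` to `t'`. -/
theorem stmt1 {V : Type} [Fintype V] [DecidableEq V] (G : SimpleGraph V)
    [DecidableRel G.Adj] (t t' : V) (hadj : G.Adj t t') (hdeg : G.degree t = 2) :
    (∃ (v : V) (c : G.Walk v v), c.IsHamiltonianCycle) ↔
      (∃ p : G.Walk t t', p.IsHamiltonian) := by
  have hcard : 3 ≤ Fintype.card V := by
    have ht : t ∉ G.neighborFinset t := G.notMem_neighborFinset_self t
    have h2 : (insert t (G.neighborFinset t)).card = 3 := by
      rw [Finset.card_insert_of_notMem ht, G.card_neighborFinset_eq_degree, hdeg]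
    calc 3 = (insert t (G.neighborFinset t)).card := h2.symm
      _ ≤ Fintype.card V := Finset.card_le_univ _
  constructor
  · rintro ⟨v, c, hc⟩
    have ht : t ∈ c.support := hc.mem_support t
    set c₁ := c.rotate t ht with hc₁def
    have hc₁ : c₁.IsHamiltonianCycle := hamcycle_rotate hc ht
    have hnn : ¬ c₁.Nil := hc₁.isCycle.not_nil
    have hnn' : ¬ c₁.reverse.Nil := by
      rw [Walk.not_nil_iff_lt_length, Walk.length_reverse, ← Walk.not_nil_iff_lt_length]
      exact hnn
    set x := c₁.getVert 1 with hx
    set y := c₁.reverse.getVert 1 with hy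
    have hax : G.Adj t x := c₁.adj_snd hnn
    have hay : G.Adj t y := c₁.reverse.adj_snd hnn'
    -- x ≠ y
    have hlen : c₁.length = Fintype.card V := hc₁.length_eq
    have e1 : c₁.edges = s(t, x) :: c₁.tail.edges := by
      conv_lhs => rw [← Walk.cons_tail_eq c₁ hnn]
      rw [Walk.edges_cons]
    have e2 : c₁.reverse.edges = s(t, y) :: c₁.reverse.tail.edges := by
      conv_lhs => rw [← Walk.cons_tail_eq c₁.reverse hnn']
      rw [Walk.edges_cons]
    have hnodup : c₁.edges.Nodup := hc₁.isCycle.isTrail.edges_nodup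
    have hxy : x ≠ y := by
      intro hxyeq
      have e3 : c₁.tail.edges.reverse ++ [s(t, x)] = s(t, x) :: c₁.reverse.tail.edges := by
        rw [← List.reverse_cons, ← e1, ← Walk.edges_reverse, e2, hxyeq]
      have htne : c₁.tail.edges.reverse ≠ [] := by
        have : c₁.tail.length + 1 = c₁.length := Walk.length_tail_add_one hnn
        intro hh
        have h0 : c₁.tail.edges = [] := by simpa using hh
        have h1 : c₁.tail.length = 0 := by rw [← Walk.length_edges, h0]; rfl
        omega
      have hhd : (c₁.tail.edges.reverse ++ [s(t, x)]).head (by simp) = s(t, x) := by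
        simp only [e3, List.head_cons]
      rw [List.head_append_of_ne_nil] at hhd
      have : s(t, x) ∈ c₁.tail.edges := by
        rw [← List.mem_reverse, ← hhd]
        exact List.head_mem htne
      rw [e1, List.nodup_cons] at hnodup
      exact hnodup.1 this
    -- t' = x or t' = y
    have hsub : ({x, y} : Finset V) ⊆ G.neighborFinset t := by
      intro z hz
      rw [SimpleGraph.mem_neighborFinset]
      rcases Finset.mem_insert.1 hz with h | h
      · exact h ▸ hax
      · exact (Finset.mem_singleton.1 h) ▸ hay
    have hcardxy : ({x, y} : Finset V).card = 2 := Finset.card_pair hxy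
    have heq : ({x, y} : Finset V) = G.neighborFinset t :=
      Finset.eq_of_subset_of_card_le hsub (by
        rw [hcardxy, G.card_neighborFinset_eq_degree, hdeg])
    have ht' : t' ∈ ({x, y} : Finset V) := by
      rw [heq, SimpleGraph.mem_neighborFinset]
      exact hadj
    rcases Finset.mem_insert.1 ht' with h | h
    · subst h
      exact ⟨c₁.tail.reverse, ham_rev hc₁.isHamiltonian_tail⟩
    · rw [Finset.mem_singleton] at h
      subst h
      exact ⟨c₁.reverse.tail.reverse, ham_rev_tail_rev hc₁⟩
  · rintro ⟨p, hp⟩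
    refine ⟨t', Walk.cons hadj.symm p, ?_⟩
    rw [Walk.isHamiltonianCycle_isCycle_and_isHamiltonian_tail]
    have hlen : p.length = Fintype.card V - 1 := hp.length_eq
    constructor
    · rw [Walk.cons_isCycle_iff]
      refine ⟨hp.isPath, fun he => ?_⟩
      cases p with
      | nil => exact G.irrefl hadj
      | cons h q =>
        rename_i w _
        rw [Walk.edges_cons, List.mem_cons] at he
        have hpath := hp.isPath
        rw [Walk.cons_isPath_iff] at hpath
        rcases he with heq | hmem
        · rw [Sym2.eq_iff] at heq
          rcases heq with ⟨h1, _⟩ | ⟨h1, _⟩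
          · exact hadj.ne' h1
          · subst h1
            have : (⟨q, hpath.1⟩ : G.Path t' t') = Path.nil := Path.loop_eq _
            have hq : q = Walk.nil := congrArg Subtype.val this
            rw [Walk.length_cons, hq] at hlen
            simp at hlen
            omega
        · have : t ∈ q.support := Walk.snd_mem_support_of_mem_edges q hmem
          exact hpath.2 this
    · rw [Walk.tail_cons]
      intro a
      erw [Walk.support_copy]
      exact hp a
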